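/- Let s ≥ 2 and r ≥ 1, let V be a finite set partitioned into blocks V_1,…,V_s with |V_i| = m_i ≥ 1, let M = m_1 + ⋯ + m_s, and fix a distinguished element v_i ∈ V_i for each i. Then the number of r-element subsets σ ⊆ V satisfying either (i) v_i ∉ σ for all i ∈ {1,…,s} and σ is not contained in any single block V_i, or (ii) v_1 ∉ σ and v_i ∈ σ for some i ∈ {2,…,s}, equals C(M−1, r) − Σ_{i=1}^{s} C(m_i−1, r) (binomial coefficients, with C(a,b) = 0 when b > a). -/

import Mathlib

open scoped ContinuousMap

/-- A set `I` of vertices is `r`-independent in `G` if every connected component of the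
induced subgraph `G[I]` has at most `r` vertices. -/
def SimpleGraph.IsRIndep {V : Type*} (G : SimpleGraph V) (r : ℕ) (I : Set V) : Prop :=
  ∀ c : (G.induce I).ConnectedComponent, c.supp.ncard ≤ r

/-- The family of faces of the `r`-independence complex `Ind_r(G)`. -/
def SimpleGraph.indSets {V : Type*} (G : SimpleGraph V) (r : ℕ) : Set (Set V) :=
  {I | G.IsRIndep r I}

/-- The geometric realization of a family `K` of subsets of a finite vertex set `V`:
the set of probability weightings of `V` whose support belongs to `K`. -/
def geomRealization {V : Type*} [Fintype V] (K : Set (Set V)) : Set (V → ℝ) :=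
  {f | (∀ v, 0 ≤ f v) ∧ (∑ v, f v) = 1 ∧ {v | f v ≠ 0} ∈ K}

/-- The `n`-dimensional sphere. -/
abbrev Sph (n : ℕ) : Type := ↥(Metric.sphere (0 : EuclideanSpace ℝ (Fin (n + 1))) 1)

/-- A base point on the `n`-sphere. -/
noncomputable def sphBase (n : ℕ) : Sph n :=
  ⟨EuclideanSpace.single 0 1, by simp [EuclideanSpace.norm_single]⟩

/-- Predicate: a point of `(Fin t × Sph d) ⊕ Unit` is a base point. -/
noncomputable def isWedgeBase (t d : ℕ) (x : (Fin t × Sph d) ⊕ Unit) : Prop :=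
  x = Sum.inr () ∨ ∃ i, x = Sum.inl (i, sphBase d)

/-- Relation identifying all base points. -/
noncomputable def wedgeRel (t d : ℕ) : ((Fin t × Sph d) ⊕ Unit) → ((Fin t × Sph d) ⊕ Unit) → Prop :=
  fun x y => isWedgeBase t d x ∧ isWedgeBase t d y

/-- The wedge of `t` spheres of dimension `d` (a one-point space if `t = 0`). -/
abbrev WedgeOfSpheres (t d : ℕ) : Type := Quot (wedgeRel t d)


/-- the count of the critical cells in the matching for the complete
`s`-partite graph: the number of `r`-element subsets `σ` of a set `V` partitioned into
blocks `V_1, …, V_s` of sizes `m_1, …, m_s` (with distinguished elements `v_i ∈ V_i`)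
such that either (i) no `v_i` lies in `σ` and `σ` is not contained in a single block, or
(ii) `v_1 ∉ σ` and `v_i ∈ σ` for some `i ≥ 2`, equals
`C(M-1, r) - Σ_i C(m_i - 1, r)` where `M = Σ_i m_i`. -/
theorem criticalCellCount (s r : ℕ) (hs : 2 ≤ s) (hr : 1 ≤ r)
    {V : Type*} [Fintype V] [DecidableEq V] (part : V → Fin s) (m : Fin s → ℕ)
    (hm : ∀ i, 1 ≤ m i) (hcard : ∀ i, {x | part x = i}.ncard = m i)
    (v : Fin s → V) (hv : ∀ i, part (v i) = i) :
    {σ : Finset V | σ.card = r ∧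
        (((∀ i, v i ∉ σ) ∧ ¬∃ i, ∀ x ∈ σ, part x = i) ∨
          (v ⟨0, by omega⟩ ∉ σ ∧ ∃ i, i ≠ ⟨0, by omega⟩ ∧ v i ∈ σ))}.ncard =
      ((∑ i, m i) - 1).choose r - ∑ i, (m i - 1).choose r := by
  classical
  set z : Fin s := ⟨0, by omega⟩ with hz
  -- block i as a finset
  set blk : Fin s → Finset V := fun i => Finset.univ.filter (fun x => part x = i) with hblk
  have hblkcard : ∀ i, (blk i).card = m i := by
    intro i
    have : {x : V | part x = i} = ↑(blk i) := by
      ext x; simp [hblk]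
    rw [← hcard i, this, Set.ncard_coe_finset]
  have hvblk : ∀ i, v i ∈ blk i := by
    intro i; simp [hblk, hv i]
  have hMcard : Fintype.card V = ∑ i, m i := by
    have := Finset.card_eq_sum_card_fiberwise (f := part) (s := Finset.univ)
      (t := Finset.univ) (fun x _ => Finset.mem_univ _)
    rw [Finset.card_univ] at this
    rw [this]
    exact Finset.sum_congr rfl fun i _ => hblkcard i
  set A : Finset (Finset V) := (Finset.univ \ {v z}).powersetCard r with hA
  set B : Fin s → Finset (Finset V) := fun i => ((blk i) \ {v i}).powersetCard r with hB
  have hAcard : A.card = ((∑ i, m i) - 1).choose r := by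
    rw [hA, Finset.card_powersetCard, Finset.card_sdiff_of_subset (by simp),
      Finset.card_univ, Finset.card_singleton, hMcard]
  have hBcard : ∀ i, (B i).card = (m i - 1).choose r := by
    intro i
    rw [hB]
    simp only []
    rw [Finset.card_powersetCard, Finset.card_sdiff_of_subset (by simp [hvblk i]),
      Finset.card_singleton, hblkcard]
  have hmemA : ∀ σ : Finset V, σ ∈ A ↔ σ.card = r ∧ v z ∉ σ := by
    intro σ
    rw [hA, Finset.mem_powersetCard]
    constructor
    · rintro ⟨h1, h2⟩
      refine ⟨h2, fun hc => ?_⟩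
      have := h1 hc
      simp at this
    · rintro ⟨h1, h2⟩
      refine ⟨fun x hx => ?_, h1⟩
      simp only [Finset.mem_sdiff, Finset.mem_univ, true_and, Finset.mem_singleton]
      rintro rfl; exact h2 hx
  have hmemB : ∀ i (σ : Finset V), σ ∈ B i ↔ σ.card = r ∧ v i ∉ σ ∧ ∀ x ∈ σ, part x = i := by
    intro i σ
    rw [hB]
    simp only [Finset.mem_powersetCard]
    constructor
    · rintro ⟨h1, h2⟩
      refine ⟨h2, fun hc => ?_, fun x hx => ?_⟩
      · have := h1 hc; simp at this
      · have := h1 hx; simp only [Finset.mem_sdiff, hblk, Finset.mem_filter] at this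
        exact this.1.2
    · rintro ⟨h1, h2, h3⟩
      refine ⟨fun x hx => ?_, h1⟩
      simp only [Finset.mem_sdiff, hblk, Finset.mem_filter, Finset.mem_univ, true_and,
        Finset.mem_singleton]
      exact ⟨h3 x hx, fun hc => h2 (hc ▸ hx)⟩
  set Bu : Finset (Finset V) := Finset.univ.biUnion B with hBu
  have hBuA : Bu ⊆ A := by
    intro σ hσ
    rw [hBu, Finset.mem_biUnion] at hσ
    obtain ⟨i, -, hσ⟩ := hσ
    rw [hmemB] at hσ
    rw [hmemA]
    refine ⟨hσ.1, fun hc => ?_⟩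
    have hp := hσ.2.2 _ hc
    rw [hv z] at hp
    subst hp
    exact hσ.2.1 hc
  have hdisj : ∀ i ∈ Finset.univ, ∀ j ∈ Finset.univ, i ≠ j →
      Disjoint (B i) (B j) := by
    intro i _ j _ hij
    rw [Finset.disjoint_left]
    intro σ hi hj
    rw [hmemB] at hi hj
    have hne : σ.Nonempty := by
      rw [← Finset.card_pos, hi.1]; omega
    obtain ⟨x, hx⟩ := hne
    exact hij ((hi.2.2 x hx).symm.trans (hj.2.2 x hx))
  have hBucard : Bu.card = ∑ i, (m i - 1).choose r := by
    rw [hBu, Finset.card_biUnion hdisj]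
    exact Finset.sum_congr rfl fun i _ => hBcard i
  -- the target set equals A \ Bu
  have hSet : {σ : Finset V | σ.card = r ∧
        (((∀ i, v i ∉ σ) ∧ ¬∃ i, ∀ x ∈ σ, part x = i) ∨
          (v z ∉ σ ∧ ∃ i, i ≠ z ∧ v i ∈ σ))} = ↑(A \ Bu) := by
    ext σ
    simp only [Set.mem_setOf_eq, Finset.coe_sdiff, Set.mem_diff, Finset.mem_coe,
      hmemA, hBu, Finset.mem_biUnion]
    constructor
    · rintro ⟨hc, h | h⟩
      · refine ⟨⟨hc, h.1 z⟩, ?_⟩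
        rintro ⟨i, -, hi⟩
        rw [hmemB] at hi
        exact h.2 ⟨i, hi.2.2⟩
      · refine ⟨⟨hc, h.1⟩, ?_⟩
        rintro ⟨j, -, hj⟩
        rw [hmemB] at hj
        obtain ⟨i, hiz, hiv⟩ := h.2
        by_cases hji : j = i
        · subst hji; exact hj.2.1 hiv
        · have := hj.2.2 _ hiv
          rw [hv i] at this
          exact hji this.symm
    · rintro ⟨⟨hc, hvz⟩, hnB⟩
      refine ⟨hc, ?_⟩
      by_cases hex : ∃ i, i ≠ z ∧ v i ∈ σ
      · exact Or.inr ⟨hvz, hex⟩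
      · push_neg at hex
        left
        have hall : ∀ i, v i ∉ σ := by
          intro i
          by_cases hiz : i = z
          · subst hiz; exact hvz
          · exact hex i hiz
        refine ⟨hall, ?_⟩
        rintro ⟨i, hi⟩
        exact hnB ⟨i, Finset.mem_univ i, (hmemB i σ).2 ⟨hc, hall i, hi⟩⟩
  rw [hSet, Set.ncard_coe_finset, Finset.card_sdiff_of_subset hBuA, hAcard, hBucard]
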